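/- arXiv:2502.10225 — 2 statements merged into one kernel-verified Lean document; each statement's English description precedes it below -/
import Mathlib

section
/- There is a universal constant C > 0 with the following property. Let 0 < r < R, let A_{r,R} = {x ∈ ℝ² : r < |x| < R}, and let u be a C¹ function on the closed annulus {x : r ≤ |x| ≤ R} that vanishes on the inner circle {|x| = r}. Then ∫_{A_{r,R}} u² dA ≤ C · R² · log(R/r) · ∫_{A_{r,R}} |∇u|² dA. -/
open MeasureTheory Metric Real
noncomputable section
local notation "E2" => EuclideanSpace ℝ (Fin 2)
open Set

lemma cs_interval {a b : ℝ} (hab : a ≤ b) {f g : ℝ → ℝ}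
    (hf : ContinuousOn f (Set.Icc a b)) (hg : ContinuousOn g (Set.Icc a b))
    (hf0 : ∀ x ∈ Set.Icc a b, 0 ≤ f x) (hg0 : ∀ x ∈ Set.Icc a b, 0 ≤ g x) :
    (∫ t in a..b, f t * g t) ^ 2 ≤ (∫ t in a..b, f t ^ 2) * (∫ t in a..b, g t ^ 2) := by
  have hIoc : Set.Ioc a b ⊆ Set.Icc a b := Set.Ioc_subset_Icc_self
  set μ : Measure ℝ := volume.restrict (Set.Ioc a b) with hμ
  have hfm : AEStronglyMeasurable f μ :=
    (hf.mono hIoc).aestronglyMeasurable measurableSet_Ioc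
  have hgm : AEStronglyMeasurable g μ :=
    (hg.mono hIoc).aestronglyMeasurable measurableSet_Ioc
  have hf2 : Integrable (fun x => f x ^ 2) μ :=
    ((hf.pow 2).integrableOn_Icc).mono_set hIoc
  have hg2 : Integrable (fun x => g x ^ 2) μ :=
    ((hg.pow 2).integrableOn_Icc).mono_set hIoc
  have hfL : MemLp f 2 μ := (memLp_two_iff_integrable_sq hfm).2 hf2
  have hgL : MemLp g 2 μ := (memLp_two_iff_integrable_sq hgm).2 hg2
  have hf0' : 0 ≤ᵐ[μ] f :=
    (ae_restrict_iff' measurableSet_Ioc).2 (ae_of_all _ fun x hx => hf0 x (hIoc hx))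
  have hg0' : 0 ≤ᵐ[μ] g :=
    (ae_restrict_iff' measurableSet_Ioc).2 (ae_of_all _ fun x hx => hg0 x (hIoc hx))
  have hpq : Real.HolderConjugate 2 2 := ⟨by norm_num, by norm_num, by norm_num⟩
  have h2 : (ENNReal.ofReal (2:ℝ)) = 2 := by norm_num
  have hH := integral_mul_le_Lp_mul_Lq_of_nonneg hpq hf0' hg0' (h2 ▸ hfL) (h2 ▸ hgL)
  rw [intervalIntegral.integral_of_le hab, intervalIntegral.integral_of_le hab,
    intervalIntegral.integral_of_le hab]
  have hA : 0 ≤ ∫ x, f x ^ (2:ℝ) ∂μ := by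
    apply integral_nonneg_of_ae
    filter_upwards [hf0'] with x hx
    exact Real.rpow_nonneg hx 2
  have hB : 0 ≤ ∫ x, g x ^ (2:ℝ) ∂μ := by
    apply integral_nonneg_of_ae
    filter_upwards [hg0'] with x hx
    exact Real.rpow_nonneg hx 2
  have hL : 0 ≤ ∫ x, f x * g x ∂μ := by
    apply integral_nonneg_of_ae
    filter_upwards [hf0', hg0'] with x h1x h2x
    exact mul_nonneg h1x h2x
  have key : ∀ X : ℝ, 0 ≤ X → (X ^ (1/2:ℝ)) ^ (2:ℕ) = X := fun X hX => by
    rw [← Real.rpow_natCast (X ^ (1/2:ℝ)) 2, ← Real.rpow_mul hX]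
    norm_num
  have hrw : ∀ h : ℝ, h ^ (2:ℝ) = h ^ (2:ℕ) := fun h => by
    rw [show ((2:ℝ)) = ((2:ℕ):ℝ) by norm_num, Real.rpow_natCast]
  calc (∫ x, f x * g x ∂μ)^2 ≤ ((∫ x, f x ^ (2:ℝ) ∂μ) ^ (1/2:ℝ) * (∫ x, g x ^ (2:ℝ) ∂μ) ^ (1/2:ℝ))^2 := by
        apply pow_le_pow_left₀ hL hH
    _ = (∫ x, f x ^ (2:ℝ) ∂μ) * (∫ x, g x ^ (2:ℝ) ∂μ) := by
        rw [mul_pow, key _ hA, key _ hB]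
    _ = (∫ x, f x ^ 2 ∂μ) * (∫ x, g x ^ 2 ∂μ) := by
        congr 1 <;> apply integral_congr_ae <;> exact ae_of_all _ fun x => hrw _


lemma grad_norm_eq (u : E2 → ℝ) (x : E2) : ‖gradient u x‖ = ‖fderiv ℝ u x‖ := by
  rw [gradient]
  exact LinearIsometryEquiv.norm_map _ _

lemma key1d (r R : ℝ) (hr : 0 < r) (hrR : r < R) (u : E2 → ℝ) (hu : ContDiff ℝ 1 u)
    (e : E2) (he : ‖e‖ = 1) (hzero : u (r • e) = 0) (ρ : ℝ) (hρ : ρ ∈ Set.Icc r R) :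
    u (ρ • e) ^ 2 ≤ Real.log (R / r) * ∫ t in r..R, t * ‖gradient u (t • e)‖ ^ 2 := by
  obtain ⟨hρ1, hρ2⟩ := hρ
  set h : ℝ → ℝ := fun t => (fderiv ℝ u (t • e)) e with hh
  have hder : ∀ t : ℝ, HasDerivAt (fun s : ℝ => u (s • e)) (h t) t := by
    intro t
    have h1 : HasDerivAt (fun s : ℝ => s • e) e t := by
      simpa using (hasDerivAt_id t).smul_const e
    exact ((hu.differentiable one_ne_zero (t • e)).hasFDerivAt).comp_hasDerivAt t h1
  have hcont : Continuous h := by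
    exact ((hu.continuous_fderiv one_ne_zero).comp (continuous_id.smul continuous_const)).clm_apply
      continuous_const
  have hgradcont : Continuous fun t : ℝ => ‖gradient u (t • e)‖ := by
    have : Continuous fun x : E2 => gradient u x := by
      unfold gradient
      exact (LinearIsometryEquiv.continuous _).comp (hu.continuous_fderiv one_ne_zero)
    exact (this.comp (continuous_id.smul continuous_const)).norm
  have hbd : ∀ t : ℝ, |h t| ≤ ‖gradient u (t • e)‖ := by
    intro t
    rw [grad_norm_eq]
    calc |h t| ≤ ‖fderiv ℝ u (t • e)‖ * ‖e‖ := (fderiv ℝ u (t • e)).le_opNorm e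
      _ = ‖fderiv ℝ u (t • e)‖ := by rw [he, mul_one]
  -- FTC
  have hftc : u (ρ • e) = ∫ t in r..ρ, h t := by
    have := intervalIntegral.integral_eq_sub_of_hasDerivAt
      (f := fun s : ℝ => u (s • e)) (f' := h) (a := r) (b := ρ)
      (fun t _ => hder t) (hcont.intervalIntegrable r ρ)
    simp only [hzero, sub_zero] at this
    exact this.symm
  -- Cauchy-Schwarz
  have hcs := cs_interval hρ1 (f := fun t => (Real.sqrt t)⁻¹) (g := fun t => Real.sqrt t * |h t|)
    (by
      apply ContinuousOn.inv₀ (Real.continuous_sqrt.continuousOn)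
      intro x hx
      have : (0:ℝ) < x := lt_of_lt_of_le hr hx.1
      positivity)
    ((Real.continuous_sqrt.continuousOn).mul (hcont.abs.continuousOn))
    (fun x hx => by positivity) (fun x hx => by positivity)
  have hfg : ∀ t ∈ Set.Icc r ρ, (Real.sqrt t)⁻¹ * (Real.sqrt t * |h t|) = |h t| := by
    intro t ht
    have ht0 : (0:ℝ) < t := lt_of_lt_of_le hr ht.1
    rw [← mul_assoc, inv_mul_cancel₀ (Real.sqrt_pos.2 ht0).ne', one_mul]
  have hfsq : ∀ t ∈ Set.Icc r ρ, ((Real.sqrt t)⁻¹) ^ 2 = t⁻¹ := by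
    intro t ht
    have ht0 : (0:ℝ) ≤ t := le_trans hr.le ht.1
    rw [inv_pow, Real.sq_sqrt ht0]
  have hgsq : ∀ t ∈ Set.Icc r ρ, (Real.sqrt t * |h t|) ^ 2 = t * h t ^ 2 := by
    intro t ht
    have ht0 : (0:ℝ) ≤ t := le_trans hr.le ht.1
    rw [mul_pow, Real.sq_sqrt ht0, sq_abs]
  have e1 : (∫ t in r..ρ, (Real.sqrt t)⁻¹ * (Real.sqrt t * |h t|)) = ∫ t in r..ρ, |h t| := by
    apply intervalIntegral.integral_congr
    intro t ht
    rw [Set.uIcc_of_le hρ1] at ht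
    exact hfg t ht
  have e2 : (∫ t in r..ρ, ((Real.sqrt t)⁻¹) ^ 2) = Real.log (ρ / r) := by
    rw [show (∫ t in r..ρ, ((Real.sqrt t)⁻¹) ^ 2) = ∫ t in r..ρ, t⁻¹ from
      intervalIntegral.integral_congr fun t ht => hfsq t ((Set.uIcc_of_le hρ1) ▸ ht)]
    exact integral_inv_of_pos hr (lt_of_lt_of_le hr hρ1)
  have hint1 : IntervalIntegrable (fun t => t * h t ^ 2) volume r ρ :=
    ((continuous_id.mul (hcont.pow 2)).intervalIntegrable r ρ)
  have hint2 : IntervalIntegrable (fun t => t * ‖gradient u (t • e)‖ ^ 2) volume r ρ :=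
    ((continuous_id.mul (hgradcont.pow 2)).intervalIntegrable r ρ)
  have hint3 : IntervalIntegrable (fun t => t * ‖gradient u (t • e)‖ ^ 2) volume r R :=
    ((continuous_id.mul (hgradcont.pow 2)).intervalIntegrable r R)
  have e3 : (∫ t in r..ρ, (Real.sqrt t * |h t|) ^ 2) ≤ ∫ t in r..R, t * ‖gradient u (t • e)‖ ^ 2 := by
    have s1 : (∫ t in r..ρ, (Real.sqrt t * |h t|) ^ 2) = ∫ t in r..ρ, t * h t ^ 2 :=
      intervalIntegral.integral_congr fun t ht => hgsq t ((Set.uIcc_of_le hρ1) ▸ ht)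
    rw [s1]
    have s2 : (∫ t in r..ρ, t * h t ^ 2) ≤ ∫ t in r..ρ, t * ‖gradient u (t • e)‖ ^ 2 := by
      apply intervalIntegral.integral_mono_on hρ1 hint1 hint2
      intro t ht
      have ht0 : (0:ℝ) ≤ t := le_trans hr.le ht.1
      have : h t ^ 2 ≤ ‖gradient u (t • e)‖ ^ 2 := by
        rw [← sq_abs (h t)]
        exact pow_le_pow_left₀ (abs_nonneg _) (hbd t) 2
      exact mul_le_mul_of_nonneg_left this ht0
    refine s2.trans ?_
    rw [← intervalIntegral.integral_add_adjacent_intervals hint2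
      ((continuous_id.mul (hgradcont.pow 2)).intervalIntegrable ρ R)]
    have : 0 ≤ ∫ t in ρ..R, t * ‖gradient u (t • e)‖ ^ 2 := by
      apply intervalIntegral.integral_nonneg hρ2
      intro t ht
      have : (0:ℝ) ≤ t := le_trans (le_trans hr.le hρ1) ht.1
      positivity
    linarith
  -- combine
  have habs : |u (ρ • e)| ≤ ∫ t in r..ρ, |h t| := by
    rw [hftc]
    exact intervalIntegral.abs_integral_le_integral_abs hρ1
  have hM' : 0 ≤ ∫ t in r..R, t * ‖gradient u (t • e)‖ ^ 2 := by
    apply intervalIntegral.integral_nonneg hrR.le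
    intro t ht
    have : (0:ℝ) ≤ t := le_trans hr.le ht.1
    positivity
  have hlog : Real.log (ρ / r) ≤ Real.log (R / r) := by
    apply Real.log_le_log (div_pos (hr.trans_le hρ1) hr)
    exact (div_le_div_iff_of_pos_right hr).2 hρ2
  calc u (ρ • e) ^ 2 = |u (ρ • e)| ^ 2 := (sq_abs _).symm
    _ ≤ (∫ t in r..ρ, |h t|) ^ 2 := pow_le_pow_left₀ (abs_nonneg _) habs 2
    _ = (∫ t in r..ρ, (Real.sqrt t)⁻¹ * (Real.sqrt t * |h t|)) ^ 2 := by rw [e1]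
    _ ≤ (∫ t in r..ρ, ((Real.sqrt t)⁻¹) ^ 2) * ∫ t in r..ρ, (Real.sqrt t * |h t|) ^ 2 := hcs
    _ ≤ Real.log (R / r) * ∫ t in r..R, t * ‖gradient u (t • e)‖ ^ 2 := by
      rw [e2]
      have hL0 : 0 ≤ Real.log (ρ / r) := by
        apply Real.log_nonneg
        rw [le_div_iff₀ hr]
        linarith
      have hM0 : 0 ≤ ∫ t in r..ρ, (Real.sqrt t * |h t|) ^ 2 := by
        apply intervalIntegral.integral_nonneg hρ1
        intro t ht
        positivity
      exact mul_le_mul hlog e3 hM0 (Real.log_nonneg (by rw [le_div_iff₀ hr]; linarith))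

def V (p : ℝ × ℝ) : E2 := (EuclideanSpace.equiv (Fin 2) ℝ).symm ![p.1, p.2]

lemma V_measurePreserving : MeasurePreserving V := by
  have h1 := (EuclideanSpace.volume_preserving_symm_measurableEquiv_toLp (Fin 2)).symm
  have h2 := (MeasureTheory.volume_preserving_finTwoArrow ℝ).symm
  have : V = (MeasurableEquiv.toLp 2 (Fin 2 → ℝ)) ∘ (MeasurableEquiv.finTwoArrow).symm := by
    funext p; rfl
  rw [this]; exact h1.comp h2

lemma V_norm (p : ℝ × ℝ) : ‖V p‖ = Real.sqrt (p.1^2 + p.2^2) := by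
  rw [EuclideanSpace.norm_eq]
  simp [V, Fin.sum_univ_two]

lemma V_smul (a c d : ℝ) : V (a*c, a*d) = a • V (c, d) := by
  simp only [V]
  rw [← _root_.map_smul]
  congr 1
  ext i
  fin_cases i <;> simp

def eθ (θ : ℝ) : E2 := V (Real.cos θ, Real.sin θ)

lemma eθ_norm (θ : ℝ) : ‖eθ θ‖ = 1 := by
  rw [eθ, V_norm, Real.cos_sq_add_sin_sq, Real.sqrt_one]

lemma eθ_continuous : Continuous eθ := by
  apply (EuclideanSpace.equiv (Fin 2) ℝ).symm.continuous.comp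
  exact continuous_pi fun i => by fin_cases i <;> simp [Real.continuous_cos, Real.continuous_sin]

-- polar change of variables for annulus
lemma polar_annulus (r R : ℝ) (hr : 0 < r) (hrR : r < R) (w : E2 → ℝ) :
    (∫ x in Metric.ball (0 : E2) R \ Metric.closedBall (0 : E2) r, w x) =
      ∫ p in Set.Ioo r R ×ˢ Set.Ioo (-π) π, p.1 * w (p.1 • eθ p.2) := by
  set A : Set E2 := Metric.ball (0 : E2) R \ Metric.closedBall (0 : E2) r with hA
  have hAm : MeasurableSet A := measurableSet_ball.diff measurableSet_closedBall
  have step1 : (∫ x in A, w x) = ∫ x, A.indicator w x := (integral_indicator hAm).symm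
  have step2 : (∫ x, A.indicator w x) = ∫ p : ℝ × ℝ, A.indicator w (V p) :=
    (V_measurePreserving.integral_comp
      ((MeasurableEquiv.toLp 2 (Fin 2 → ℝ)).measurableEmbedding.comp
        (MeasurableEquiv.finTwoArrow).symm.measurableEmbedding) _).symm
  have step3 : (∫ p : ℝ × ℝ, A.indicator w (V p)) =
      ∫ p in polarCoord.target, p.1 • A.indicator w (V (polarCoord.symm p)) :=
    (integral_comp_polarCoord_symm fun p => A.indicator w (V p)).symm
  have hVpolar : ∀ p : ℝ × ℝ, V (polarCoord.symm p) = p.1 • eθ p.2 := by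
    intro p
    rw [polarCoord_symm_apply, V_smul, eθ]
  have hmem : ∀ ρ : ℝ, 0 < ρ → ∀ θ : ℝ, (ρ • eθ θ ∈ A ↔ ρ ∈ Set.Ioo r R) := by
    intro ρ hρ θ
    have hn : ‖ρ • eθ θ‖ = ρ := by
      rw [norm_smul, eθ_norm, mul_one, Real.norm_eq_abs, abs_of_pos hρ]
    simp only [hA, Set.mem_diff, mem_ball_zero_iff, mem_closedBall_zero_iff, hn, Set.mem_Ioo,
      not_le]
    tauto
  have step4 : (∫ p in polarCoord.target, p.1 • A.indicator w (V (polarCoord.symm p))) =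
      ∫ p in polarCoord.target,
        (Set.Ioo r R ×ˢ Set.Ioo (-π) π).indicator (fun p => p.1 * w (p.1 • eθ p.2)) p := by
    apply setIntegral_congr_fun polarCoord.open_target.measurableSet
    intro p hp
    rw [polarCoord_target] at hp
    obtain ⟨hp1, hp2⟩ := hp
    beta_reduce
    rw [hVpolar]
    by_cases hmemp : p.1 ∈ Set.Ioo r R
    · rw [Set.indicator_of_mem ((hmem p.1 hp1 p.2).2 hmemp),
        Set.indicator_of_mem (by exact ⟨hmemp, hp2⟩)]
      simp [smul_eq_mul]
    · rw [Set.indicator_of_notMem (fun hc => hmemp ((hmem p.1 hp1 p.2).1 hc)),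
        Set.indicator_of_notMem (fun hc => hmemp hc.1)]
      simp
  have hsub : (Set.Ioo r R ×ˢ Set.Ioo (-π) π) ⊆ polarCoord.target := by
    rw [polarCoord_target]
    intro p hp
    exact ⟨lt_of_le_of_lt hr.le hp.1.1 |>.trans_le le_rfl, hp.2⟩
  have step5 : (∫ p in polarCoord.target,
      (Set.Ioo r R ×ˢ Set.Ioo (-π) π).indicator (fun p => p.1 * w (p.1 • eθ p.2)) p) =
      ∫ p in Set.Ioo r R ×ˢ Set.Ioo (-π) π, p.1 * w (p.1 • eθ p.2) := by
    rw [setIntegral_indicator (measurableSet_Ioo.prod measurableSet_Ioo),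
      Set.inter_eq_self_of_subset_right hsub]
  rw [step1, step2, step3, step4, step5]


/-- Lemma 4.1(iii): Poincaré-type inequality with logarithmic
constant on the annulus `{r < |x| < R}` in `ℝ²`, for `C¹` functions vanishing on
the inner circle `{|x| = r}`. -/
theorem annulus_poincare_estimate :
    ∃ C : ℝ, 0 < C ∧
      ∀ r R : ℝ, 0 < r → r < R →
        ∀ u : E2 → ℝ, ContDiff ℝ 1 u →
          (∀ x ∈ Metric.sphere (0 : E2) r, u x = 0) →
          (∫ x in Metric.ball (0 : E2) R \ Metric.closedBall (0 : E2) r, u x ^ 2) ≤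
            C * R ^ 2 * Real.log (R / r) *
              ∫ x in Metric.ball (0 : E2) R \ Metric.closedBall (0 : E2) r,
                ‖gradient u x‖ ^ 2 := by
  refine ⟨1, one_pos, fun r R hr hrR u hu hsph => ?_⟩
  set A : Set E2 := Metric.ball (0 : E2) R \ Metric.closedBall (0 : E2) r with hA
  have hAm : MeasurableSet A := measurableSet_ball.diff measurableSet_closedBall
  have hgradc : Continuous fun x : E2 => ‖gradient u x‖ := by
    have : Continuous fun x : E2 => gradient u x := by
      unfold gradient
      exact (LinearIsometryEquiv.continuous _).comp (hu.continuous_fderiv one_ne_zero)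
    exact this.norm
  -- polar representations
  have hpolarL := polar_annulus r R hr hrR (fun x => u x ^ 2)
  have hpolarR := polar_annulus r R hr hrR (fun x => ‖gradient u x‖ ^ 2)
  set rect : Set (ℝ × ℝ) := Set.Ioo r R ×ˢ Set.Ioo (-π) π with hrect
  have hrectm : MeasurableSet rect := measurableSet_Ioo.prod measurableSet_Ioo
  set k : ℝ × ℝ → ℝ := fun p => p.1 * ‖gradient u (p.1 • eθ p.2)‖ ^ 2 with hk
  set F : ℝ × ℝ → ℝ := fun p => p.1 * u (p.1 • eθ p.2) ^ 2 with hF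
  have hkc : Continuous k := by
    apply continuous_fst.mul
    exact ((hgradc.comp (continuous_fst.smul (eθ_continuous.comp continuous_snd))).pow 2)
  have hFc : Continuous F := by
    apply continuous_fst.mul
    exact ((hu.continuous.comp (continuous_fst.smul (eθ_continuous.comp continuous_snd))).pow 2)
  have hrectsub : rect ⊆ Set.Icc r R ×ˢ Set.Icc (-π) π :=
    Set.prod_mono Set.Ioo_subset_Icc_self Set.Ioo_subset_Icc_self
  have hcomp : IsCompact (Set.Icc r R ×ˢ Set.Icc (-π) π) := isCompact_Icc.prod isCompact_Icc
  have hkint : IntegrableOn k rect := 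
    ((hkc.continuousOn).integrableOn_compact hcomp).mono_set hrectsub
  have hFint : IntegrableOn F rect := 
    ((hFc.continuousOn).integrableOn_compact hcomp).mono_set hrectsub
  set μ' := volume.restrict (Set.Ioo r R) with hμ'
  set ν' := volume.restrict (Set.Ioo (-π) π) with hν'
  have hprodrw : (volume : Measure (ℝ × ℝ)).restrict rect = μ'.prod ν' := by
    rw [hμ', hν', Measure.prod_restrict, ← Measure.volume_eq_prod]
  set G : ℝ → ℝ := fun θ => ∫ t in Set.Ioo r R, k (t, θ) with hG
  have hkint' : Integrable k (μ'.prod ν') := by rwa [← hprodrw]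
  have hGint : Integrable G ν' := by
    have := hkint'.integral_prod_right
    simpa [hG, hμ'] using this
  have hGrect : (∫ p in rect, k p) = ∫ θ in Set.Ioo (-π) π, G θ := by
    rw [show (∫ p in rect, k p) = ∫ p, k p ∂(μ'.prod ν') by rw [← hprodrw],
      integral_prod_symm k hkint']
  -- pointwise bound used, with G θ as interval integral
  have hGeq : ∀ θ : ℝ, G θ = ∫ t in r..R, t * ‖gradient u (t • eθ θ)‖ ^ 2 := by
    intro θ
    rw [intervalIntegral.integral_of_le hrR.le, integral_Ioc_eq_integral_Ioo]
  have hGnonneg : ∀ θ : ℝ, 0 ≤ G θ := by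
    intro θ
    apply setIntegral_nonneg measurableSet_Ioo
    intro t ht
    have := ht.1
    have : (0:ℝ) ≤ t := (hr.trans ht.1).le
    positivity
  have hptwise : ∀ p ∈ rect, F p ≤ Real.log (R / r) * p.1 * G p.2 := by
    rintro ⟨ρ, θ⟩ ⟨hρ, hθ⟩
    have hρ0 : (0:ℝ) ≤ ρ := (hr.trans hρ.1).le
    have hzero : u (r • eθ θ) = 0 := by
      apply hsph
      rw [mem_sphere_zero_iff_norm, norm_smul, eθ_norm, mul_one, Real.norm_eq_abs,
        abs_of_pos hr]
    have hkey := key1d r R hr hrR u hu (eθ θ) (eθ_norm θ) hzero ρ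
      ⟨hρ.1.le, hρ.2.le⟩
    rw [← hGeq θ] at hkey
    calc F (ρ, θ) = ρ * u (ρ • eθ θ) ^ 2 := rfl
      _ ≤ ρ * (Real.log (R / r) * G θ) := mul_le_mul_of_nonneg_left hkey hρ0
      _ = Real.log (R / r) * ρ * G θ := by ring
  -- integrate the bound
  have hfint : Integrable (fun ρ : ℝ => Real.log (R / r) * ρ) μ' :=
    ((continuous_const.mul continuous_id).integrableOn_Icc).mono_set Set.Ioo_subset_Icc_self
  have hHint : IntegrableOn (fun p : ℝ × ℝ => (Real.log (R / r) * p.1) * G p.2) rect := by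
    rw [IntegrableOn, hprodrw]
    exact hfint.mul_prod hGint
  have hmono : (∫ p in rect, F p) ≤ ∫ p in rect, (Real.log (R / r) * p.1) * G p.2 :=
    setIntegral_mono_on hFint hHint hrectm (by
      intro p hp
      simpa [mul_assoc] using hptwise p hp)
  have hsplit : (∫ p in rect, (Real.log (R / r) * p.1) * G p.2) =
      (∫ ρ in Set.Ioo r R, Real.log (R / r) * ρ) * ∫ θ in Set.Ioo (-π) π, G θ := by
    rw [hrect, Measure.volume_eq_prod, setIntegral_prod_mul]
  have hρint : (∫ ρ in Set.Ioo r R, Real.log (R / r) * ρ) =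
      Real.log (R / r) * ((R ^ 2 - r ^ 2) / 2) := by
    rw [integral_const_mul]
    congr 1
    rw [← integral_Ioc_eq_integral_Ioo, ← intervalIntegral.integral_of_le hrR.le,
      integral_id]
  have hRHS0 : 0 ≤ ∫ x in A, ‖gradient u x‖ ^ 2 := by
    apply setIntegral_nonneg hAm
    intro x _
    positivity
  have hlog0 : 0 ≤ Real.log (R / r) := Real.log_nonneg (by rw [le_div_iff₀ hr]; linarith)
  calc (∫ x in A, u x ^ 2) = ∫ p in rect, F p := hpolarL
    _ ≤ (∫ ρ in Set.Ioo r R, Real.log (R / r) * ρ) * ∫ θ in Set.Ioo (-π) π, G θ :=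
        hmono.trans_eq hsplit
    _ = Real.log (R / r) * ((R ^ 2 - r ^ 2) / 2) * ∫ x in A, ‖gradient u x‖ ^ 2 := by
        rw [hρint, ← hGrect, ← hpolarR]
    _ ≤ 1 * R ^ 2 * Real.log (R / r) * ∫ x in A, ‖gradient u x‖ ^ 2 := by
        apply mul_le_mul_of_nonneg_right _ hRHS0
        have h1 : (R ^ 2 - r ^ 2) / 2 ≤ R ^ 2 := by nlinarith
        calc Real.log (R / r) * ((R ^ 2 - r ^ 2) / 2) ≤ Real.log (R / r) * R ^ 2 :=
              mul_le_mul_of_nonneg_left h1 hlog0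
          _ = 1 * R ^ 2 * Real.log (R / r) := by ring

end
end

section
/- Let T > 0 and let φ : ℝ × [0, T] → ℝ be a C² function that is harmonic (Δφ = 0) and 2π-periodic in the first variable. Then ∫_0^{2π} ∫_0^T φ(x, t)² dt dx ≤ (T/2) · ( ∫_0^{2π} φ(x, 0)² dx + ∫_0^{2π} φ(x, T)² dx ). In other words, on the flat cylinder S¹ × [0, T], the L² norm of a harmonic function is controlled by (T/2) times its boundary L² norm. -/
open MeasureTheory Real intervalIntegral

noncomputable section

set_option maxHeartbeats 1000000 in
open Set in
/-- inequality (Eaharm): if `φ` is `C²` on the strip `ℝ × [0, T]`,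
harmonic on `ℝ × (0, T)`, and `2π`-periodic in the first variable, then on the flat
cylinder `S¹ × [0, T]` its `L²` norm is controlled by `T/2` times its boundary `L²`
norm:
`∫₀^{2π} ∫₀^T φ² ≤ (T/2)(∫₀^{2π} φ(·,0)² + ∫₀^{2π} φ(·,T)²)`. -/
theorem harmonic_cylinder_L2_bound :
    ∀ T : ℝ, 0 < T →
      ∀ φ : ℝ → ℝ → ℝ,
        ContDiffOn ℝ 2 (fun p : ℝ × ℝ => φ p.1 p.2) (Set.univ ×ˢ Set.Icc 0 T) →
        (∀ x : ℝ, ∀ t ∈ Set.Ioo 0 T,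
          deriv (deriv (fun y : ℝ => φ y t)) x + deriv (deriv (fun s : ℝ => φ x s)) t = 0) →
        (∀ x t : ℝ, φ (x + 2 * π) t = φ x t) →
        (∫ x in (0 : ℝ)..(2 * π), ∫ t in (0 : ℝ)..T, (φ x t) ^ 2) ≤
          T / 2 * ((∫ x in (0 : ℝ)..(2 * π), (φ x 0) ^ 2) +
            ∫ x in (0 : ℝ)..(2 * π), (φ x T) ^ 2) := by
  intro T hT φ hφ hharm hper
  set S : Set (ℝ × ℝ) := Set.univ ×ˢ Set.Icc (0:ℝ) T with hSdef
  set Φ : ℝ × ℝ → ℝ := fun p => φ p.1 p.2 with hΦdef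
  have hU : UniqueDiffOn ℝ S := uniqueDiffOn_univ.prod (uniqueDiffOn_Icc hT)
  set D1 := fderivWithin ℝ Φ S with hD1def
  set D2 := fderivWithin ℝ D1 S with hD2def
  have hD1cd : ContDiffOn ℝ 1 D1 S := hφ.fderivWithin hU (by norm_num)
  have hD1cont : ContinuousOn D1 S := hD1cd.continuousOn
  have hD2cont : ContinuousOn D2 S := hD1cd.continuousOn_fderivWithin hU le_rfl
  set P : ℝ → ℝ → ℝ := fun x t => D1 (x, t) (0, 1) with hPdef
  set Q : ℝ → ℝ → ℝ := fun x t => D2 (x, t) ((0:ℝ), (1:ℝ)) ((0:ℝ), (1:ℝ)) with hQdef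
  -- the vertical line map
  have hι : ∀ x : ℝ, ∀ t ∈ Icc (0:ℝ) T, HasDerivWithinAt (fun s : ℝ => ((x, s) : ℝ × ℝ))
      ((0:ℝ), (1:ℝ)) (Icc 0 T) t := by
    intro x t ht
    exact ((hasDerivAt_const t x).prodMk (hasDerivAt_id t)).hasDerivWithinAt
  have hmaps : ∀ x : ℝ, MapsTo (fun s : ℝ => ((x, s) : ℝ × ℝ)) (Icc 0 T) S := by
    intro x s hs; exact ⟨trivial, hs⟩
  have hmemS : ∀ x : ℝ, ∀ t ∈ Icc (0:ℝ) T, ((x, t) : ℝ × ℝ) ∈ S := fun x t ht => ⟨trivial, ht⟩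
  -- first t-slice derivative
  have hslice1 : ∀ x : ℝ, ∀ t ∈ Icc (0:ℝ) T,
      HasDerivWithinAt (fun s => φ x s) (P x t) (Icc 0 T) t := by
    intro x t ht
    have hF : HasFDerivWithinAt Φ (D1 (x, t)) S (x, t) :=
      ((hφ.differentiableOn (by norm_num)) (x, t) (hmemS x t ht)).hasFDerivWithinAt
    exact hF.comp_hasDerivWithinAt t (hι x t ht) (hmaps x)
  -- second t-slice derivative
  have hslice2 : ∀ x : ℝ, ∀ t ∈ Icc (0:ℝ) T,
      HasDerivWithinAt (fun s => P x s) (Q x t) (Icc 0 T) t := by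
    intro x t ht
    have hF : HasFDerivWithinAt D1 (D2 (x, t)) S (x, t) :=
      ((hD1cd.differentiableOn one_ne_zero) (x, t) (hmemS x t ht)).hasFDerivWithinAt
    have h1 : HasDerivWithinAt (fun s => D1 (x, s)) (D2 (x, t) ((0:ℝ), (1:ℝ))) (Icc 0 T) t :=
      hF.comp_hasDerivWithinAt t (hι x t ht) (hmaps x)
    have := h1.clm_apply (hasDerivWithinAt_const t _ ((0:ℝ), (1:ℝ)))
    simpa using this
  -- interior versions
  have hIcc_nhds : ∀ t ∈ Ioo (0:ℝ) T, Icc (0:ℝ) T ∈ nhds t := fun t ht => Icc_mem_nhds ht.1 ht.2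
  have hat1 : ∀ x : ℝ, ∀ t ∈ Ioo (0:ℝ) T, HasDerivAt (fun s => φ x s) (P x t) t := by
    intro x t ht
    exact (hslice1 x t (Ioo_subset_Icc_self ht)).hasDerivAt (hIcc_nhds t ht)
  have hat2 : ∀ x : ℝ, ∀ t ∈ Ioo (0:ℝ) T, HasDerivAt (fun s => P x s) (Q x t) t := by
    intro x t ht
    exact (hslice2 x t (Ioo_subset_Icc_self ht)).hasDerivAt (hIcc_nhds t ht)
  -- identification with classical second derivative
  have hQid : ∀ x : ℝ, ∀ t ∈ Ioo (0:ℝ) T,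
      deriv (deriv (fun s : ℝ => φ x s)) t = Q x t := by
    intro x t ht
    have hev : deriv (fun s : ℝ => φ x s) =ᶠ[nhds t] (fun s => P x s) := by
      filter_upwards [isOpen_Ioo.mem_nhds ht] with s hs
      exact (hat1 x s hs).deriv
    rw [hev.deriv_eq]
    exact (hat2 x t ht).deriv
  -- continuity of slices on Icc
  have hu_cont : ∀ x : ℝ, ContinuousOn (fun s => φ x s) (Icc 0 T) := by
    intro x
    exact fun t ht => ((hslice1 x t ht).differentiableWithinAt).continuousWithinAt
  have hP_cont : ∀ x : ℝ, ContinuousOn (fun s => P x s) (Icc 0 T) := by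
    intro x
    exact fun t ht => ((hslice2 x t ht).differentiableWithinAt).continuousWithinAt
  have hQ_cont : ∀ x : ℝ, ContinuousOn (fun s => Q x s) (Icc 0 T) := by
    intro x
    have h1 : ContinuousOn (fun s : ℝ => D2 (x, s)) (Icc 0 T) :=
      hD2cont.comp (Continuous.continuousOn (by continuity)) (hmaps x)
    exact (h1.clm_apply continuousOn_const).clm_apply continuousOn_const
  set F : ℝ → ℝ := fun t => (T * t - t ^ 2) / 2 with hFdef
  have hFat : ∀ t : ℝ, HasDerivAt F ((T - 2 * t) / 2) t := by
    intro t
    have : HasDerivAt (fun s : ℝ => (T * s - s ^ 2) / 2) ((T * 1 - 2 * t ^ 1) / 2) t :=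
      (((hasDerivAt_id t).const_mul T).sub (hasDerivAt_pow 2 t)).div_const 2
    convert this using 1; ring
  have hF'at : ∀ t : ℝ, HasDerivAt (fun s : ℝ => (T - 2 * s) / 2) (-1) t := by
    intro t
    have : HasDerivAt (fun s : ℝ => (T - 2 * s) / 2) ((0 - 2 * 1) / 2) t :=
      ((hasDerivAt_const t T).sub ((hasDerivAt_id t).const_mul 2)).div_const 2
    convert this using 1; norm_num
  set HH : ℝ → ℝ → ℝ := fun x t => (2 * (P x t) ^ 2 + 2 * φ x t * Q x t) * F t with hHHdef
  have hHHcont : ∀ x : ℝ, ContinuousOn (fun t => HH x t) (Icc 0 T) := by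
    intro x
    exact ((continuousOn_const.mul ((hP_cont x).pow 2)).add
      ((continuousOn_const.mul (hu_cont x)).mul (hQ_cont x))).mul
      (Continuous.continuousOn (by fun_prop))
  have hHHii : ∀ x : ℝ, IntervalIntegrable (fun t => HH x t) volume 0 T := by
    intro x
    apply ContinuousOn.intervalIntegrable
    rw [uIcc_of_le hT.le]; exact hHHcont x
  have hu2ii : ∀ x : ℝ, IntervalIntegrable (fun t => (φ x t) ^ 2) volume 0 T := by
    intro x
    apply ContinuousOn.intervalIntegrable
    rw [uIcc_of_le hT.le]; exact (hu_cont x).pow 2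
  have claimA : ∀ x : ℝ,
      (∫ t in (0:ℝ)..T, (HH x t + (φ x t) ^ 2))
        = T / 2 * ((φ x 0) ^ 2 + (φ x T) ^ 2) := by
    intro x
    set g : ℝ → ℝ := fun t => (2 * φ x t * P x t) * F t - (φ x t) ^ 2 * ((T - 2 * t) / 2)
      with hgdef
    have hgcont : ContinuousOn g (Icc 0 T) := by
      apply ContinuousOn.sub
      · exact ((continuousOn_const.mul (hu_cont x)).mul (hP_cont x)).mul
          (Continuous.continuousOn (by fun_prop))
      · exact ((hu_cont x).pow 2).mul (Continuous.continuousOn (by fun_prop))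
    have hgderiv : ∀ t ∈ Ioo (0:ℝ) T,
        HasDerivWithinAt g (HH x t + (φ x t) ^ 2) (Ioi t) t := by
      intro t ht
      have h1 : HasDerivAt (fun s => 2 * φ x s * P x s)
          (2 * P x t * P x t + 2 * φ x t * Q x t) t := by
        exact ((hat1 x t ht).const_mul 2).mul (hat2 x t ht)
      have h2 : HasDerivAt (fun s => (φ x s) ^ 2) (2 * φ x t * P x t) t := by
        have : HasDerivAt (fun s => (φ x s) ^ 2) _ t := (hat1 x t ht).pow 2
        convert this using 1; ring
      have : HasDerivAt (fun s => 2 * φ x s * P x s * F s - (φ x s) ^ 2 * ((T - 2 * s) / 2)) _ t := ((h1.mul (hFat t)).sub (h2.mul (hF'at t)))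
      have h3 : HasDerivAt g (HH x t + (φ x t) ^ 2) t := by
        convert this using 1
        simp only [hHHdef]; ring
      exact h3.hasDerivWithinAt
    have hint : IntervalIntegrable (fun t => HH x t + (φ x t) ^ 2) volume 0 T :=
      (hHHii x).add (hu2ii x)
    have := intervalIntegral.integral_eq_sub_of_hasDeriv_right_of_le hT.le hgcont hgderiv hint
    rw [this]
    simp only [hgdef, hFdef]
    ring
  have hπ : (0:ℝ) ≤ 2 * π := by positivity
  -- x-slice regularity
  have hxslice : ∀ t ∈ Icc (0:ℝ) T, ContDiff ℝ 2 (fun y : ℝ => φ y t) := by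
    intro t ht
    rw [← contDiffOn_univ]
    exact hφ.comp ((contDiff_id.prodMk contDiff_const).contDiffOn)
      (fun y _ => ⟨trivial, ht⟩)
  have hPx_cont : ∀ t ∈ Icc (0:ℝ) T, Continuous (fun x => P x t) := by
    intro t ht
    rw [← continuousOn_univ]
    have h1 : ContinuousOn (fun x : ℝ => D1 (x, t)) univ :=
      hD1cont.comp ((continuous_id.prodMk continuous_const).continuousOn) (fun x _ => ⟨trivial, ht⟩)
    exact h1.clm_apply continuousOn_const
  have claimB : ∀ t ∈ Ioo (0:ℝ) T,
      0 ≤ ∫ x in (0:ℝ)..(2 * π), (2 * (P x t) ^ 2 + 2 * φ x t * Q x t) := by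
    intro t ht
    set v : ℝ → ℝ := fun y => φ y t with hvdef
    have hv : ContDiff ℝ 2 v := hxslice t (Ioo_subset_Icc_self ht)
    have hvd1 : Differentiable ℝ v := hv.differentiable two_ne_zero
    have hvd2 : ContDiff ℝ 1 (deriv v) :=
      (contDiff_succ_iff_deriv.mp (hv.of_le (by norm_num))).2.2
    have hv'd1 : Differentiable ℝ (deriv v) := hvd2.differentiable one_ne_zero
    have hv''cont : Continuous (deriv (deriv v)) := hvd2.continuous_deriv le_rfl
    have hv'cont : Continuous (deriv v) := hvd2.continuous
    have hvcont : Continuous v := hv.continuous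
    -- rewrite Q via harmonicity
    have hQv : ∀ x : ℝ, Q x t = - deriv (deriv v) x := by
      intro x
      have := hharm x t ht
      rw [hQid x t ht] at this
      linarith
    -- integration by parts in x
    have hparts : (∫ x in (0:ℝ)..(2 * π), ((deriv v x) ^ 2 + v x * deriv (deriv v) x)) = 0 := by
      have hderiv : ∀ x ∈ uIcc (0:ℝ) (2 * π),
          HasDerivAt (fun y => v y * deriv v y)
            ((deriv v x) ^ 2 + v x * deriv (deriv v) x) x := by
        intro x _
        have h1 : HasDerivAt v (deriv v x) x := (hvd1 x).hasDerivAt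
        have h2 : HasDerivAt (deriv v) (deriv (deriv v) x) x := (hv'd1 x).hasDerivAt
        have : HasDerivAt (fun y => v y * deriv v y) _ x := h1.mul h2
        convert this using 1; ring
      have hint : IntervalIntegrable (fun x => (deriv v x) ^ 2 + v x * deriv (deriv v) x)
          volume 0 (2 * π) :=
        (((hv'cont.pow 2).add (hvcont.mul hv''cont)).intervalIntegrable _ _)
      rw [intervalIntegral.integral_eq_sub_of_hasDerivAt hderiv hint]
      have e1 : v (2 * π) = v 0 := by simpa using hper 0 t
      have e2 : deriv v (2 * π) = deriv v 0 := by
        have hfun : (fun y => v (y + 2 * π)) = v := funext fun y => hper y t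
        have := deriv_comp_add_const v (2 * π) 0
        rw [hfun] at this
        simpa using this.symm
      rw [e1, e2]; ring
    have hPc : Continuous (fun x => P x t) := hPx_cont t (Ioo_subset_Icc_self ht)
    have hii1 : IntervalIntegrable
        (fun x => 2 * (P x t) ^ 2 + 2 * (deriv v x) ^ 2) volume 0 (2 * π) :=
      ((continuous_const.mul (hPc.pow 2)).add
        (continuous_const.mul (hv'cont.pow 2))).intervalIntegrable _ _
    have hii2 : IntervalIntegrable
        (fun x => (deriv v x) ^ 2 + v x * deriv (deriv v) x) volume 0 (2 * π) :=
      ((hv'cont.pow 2).add (hvcont.mul hv''cont)).intervalIntegrable _ _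
    have h1 : (∫ x in (0:ℝ)..(2 * π), (2 * (P x t) ^ 2 + 2 * φ x t * Q x t))
        = (∫ x in (0:ℝ)..(2 * π), (2 * (P x t) ^ 2 + 2 * (deriv v x) ^ 2))
          - 2 * ∫ x in (0:ℝ)..(2 * π), ((deriv v x) ^ 2 + v x * deriv (deriv v) x) := by
      rw [← intervalIntegral.integral_const_mul, ← intervalIntegral.integral_sub hii1
        (hii2.const_mul 2)]
      apply intervalIntegral.integral_congr
      intro x _
      simp only
      rw [hQv x]
      simp only [hvdef]
      ring
    rw [h1, hparts]
    have h2 : (0:ℝ) ≤ ∫ x in (0:ℝ)..(2 * π), (2 * (P x t) ^ 2 + 2 * (deriv v x) ^ 2) :=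
      intervalIntegral.integral_nonneg hπ (fun x _ => by positivity)
    linarith
  -- joint continuity of HH and Fubini
  have hFcont : Continuous F := by
    rw [hFdef]; fun_prop
  have hHu_cont : ContinuousOn (fun p : ℝ × ℝ =>
      (2 * (D1 p ((0:ℝ),(1:ℝ))) ^ 2 + 2 * Φ p * (D2 p ((0:ℝ),(1:ℝ)) ((0:ℝ),(1:ℝ))))
        * F p.2) S := by
    apply ContinuousOn.mul
    · apply ContinuousOn.add
      · exact continuousOn_const.mul (((hD1cont.clm_apply continuousOn_const)).pow 2)
      · exact (continuousOn_const.mul (hφ.continuousOn)).mul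
          ((hD2cont.clm_apply continuousOn_const).clm_apply continuousOn_const)
    · exact (hFcont.comp continuous_snd).continuousOn
  have hrect : (Ioc (0:ℝ) (2*π) ×ˢ Ioc (0:ℝ) T) ⊆ (Icc (0:ℝ) (2*π) ×ˢ Icc (0:ℝ) T) :=
    Set.prod_mono Ioc_subset_Icc_self Ioc_subset_Icc_self
  have hprod_int : Integrable (Function.uncurry (fun x t => HH x t))
      ((volume.restrict (Ioc (0:ℝ) (2*π))).prod (volume.restrict (Ioc (0:ℝ) T))) := by
    rw [Measure.prod_restrict]
    have h1 : IntegrableOn (fun p : ℝ × ℝ =>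
        (2 * (D1 p ((0:ℝ),(1:ℝ))) ^ 2 + 2 * Φ p * (D2 p ((0:ℝ),(1:ℝ)) ((0:ℝ),(1:ℝ))))
          * F p.2) (Icc (0:ℝ) (2*π) ×ˢ Icc (0:ℝ) T) (volume.prod volume) := by
      apply ContinuousOn.integrableOn_compact (isCompact_Icc.prod isCompact_Icc)
      exact hHu_cont.mono (fun p hp => ⟨trivial, hp.2⟩)
    exact h1.mono_set hrect
  have hswap : (∫ x in (0:ℝ)..(2*π), ∫ t in (0:ℝ)..T, HH x t)
      = ∫ t in (0:ℝ)..T, ∫ x in (0:ℝ)..(2*π), HH x t := by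
    rw [intervalIntegral.integral_of_le hπ, intervalIntegral.integral_of_le hT.le]
    simp_rw [intervalIntegral.integral_of_le hT.le, intervalIntegral.integral_of_le hπ]
    exact MeasureTheory.integral_integral_swap hprod_int
  have hinner_ii : IntervalIntegrable (fun x => ∫ t in (0:ℝ)..T, HH x t) volume 0 (2*π) := by
    rw [intervalIntegrable_iff, uIoc_of_le hπ]
    have := hprod_int.integral_prod_left
    have heq : (fun x => ∫ t in (0:ℝ)..T, HH x t)
        = fun x => ∫ t in Ioc (0:ℝ) T, HH x t :=
      funext fun x => intervalIntegral.integral_of_le hT.le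
    rw [heq]
    exact this
  -- boundary continuity in x
  have hb0 : Continuous (fun x => φ x 0) := (hxslice 0 ⟨le_rfl, hT.le⟩).continuous
  have hbT : Continuous (fun x => φ x T) := (hxslice T ⟨hT.le, le_rfl⟩).continuous
  have hbd_ii : IntervalIntegrable (fun x => T / 2 * ((φ x 0) ^ 2 + (φ x T) ^ 2))
      volume 0 (2*π) :=
    (continuous_const.mul ((hb0.pow 2).add (hbT.pow 2))).intervalIntegrable _ _
  -- rewrite inner integral using claimA
  have key : ∀ x : ℝ, (∫ t in (0:ℝ)..T, (φ x t) ^ 2)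
      = T / 2 * ((φ x 0) ^ 2 + (φ x T) ^ 2) - ∫ t in (0:ℝ)..T, HH x t := by
    intro x
    have h := claimA x
    rw [intervalIntegral.integral_add (hHHii x) (hu2ii x)] at h
    linarith
  have hL : (∫ x in (0:ℝ)..(2*π), ∫ t in (0:ℝ)..T, (φ x t) ^ 2)
      = (∫ x in (0:ℝ)..(2*π), T / 2 * ((φ x 0) ^ 2 + (φ x T) ^ 2))
        - ∫ x in (0:ℝ)..(2*π), ∫ t in (0:ℝ)..T, HH x t := by
    rw [← intervalIntegral.integral_sub hbd_ii hinner_ii]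
    apply intervalIntegral.integral_congr
    intro x _
    exact key x
  -- nonnegativity of the remainder
  have hrem : 0 ≤ ∫ x in (0:ℝ)..(2*π), ∫ t in (0:ℝ)..T, HH x t := by
    rw [hswap]
    apply intervalIntegral.integral_nonneg hT.le
    intro t htmem
    have hFnn : 0 ≤ F t := by
      rw [hFdef]
      have h1 : 0 ≤ t := htmem.1
      have h2 : t ≤ T := htmem.2
      nlinarith
    have hmul : (∫ x in (0:ℝ)..(2*π), HH x t)
        = (∫ x in (0:ℝ)..(2*π), (2 * (P x t) ^ 2 + 2 * φ x t * Q x t)) * F t := by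
      rw [← intervalIntegral.integral_mul_const]
    rw [hmul]
    rcases eq_or_lt_of_le htmem.1 with h0 | h0
    · have : F t = 0 := by rw [hFdef, ← h0]; ring
      rw [this]; simp
    rcases eq_or_lt_of_le htmem.2 with hTt | hTt
    · have : F t = 0 := by rw [hFdef, hTt]; ring
      rw [this]; simp
    · exact mul_nonneg (claimB t ⟨h0, hTt⟩) hFnn
  -- boundary integral splits
  have hbd_eq : (∫ x in (0:ℝ)..(2*π), T / 2 * ((φ x 0) ^ 2 + (φ x T) ^ 2))
      = T / 2 * ((∫ x in (0:ℝ)..(2*π), (φ x 0) ^ 2) + ∫ x in (0:ℝ)..(2*π), (φ x T) ^ 2) := by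
    rw [intervalIntegral.integral_const_mul, intervalIntegral.integral_add (f := fun x => (φ x 0) ^ 2) (g := fun x => (φ x T) ^ 2)
      ((hb0.pow 2).intervalIntegrable _ _) ((hbT.pow 2).intervalIntegrable _ _)]
  rw [hL, hbd_eq] at *
  linarith

end
end
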